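/- arXiv:2512.02467 — 6 statements merged into one kernel-verified Lean document; each statement's English description precedes it below -/
import Mathlib

section
/- If k0, k1 are positive and min(k0^2, k1^2 - k0) > k̄ for some k̄ ≥ 0, then with A = [[0,1],[-k0,-k1]] and P = [[2 k0 k1, k0],[k0, k1]], the matrix P·A + Aᵀ·P + 2 k̄ I₂ is negative definite. -/
open Matrix

theorem stmt_2 (k0 k1 kbar : ℝ) (hk0 : 0 < k0) (hk1 : 0 < k1) (hkbar : 0 ≤ kbar)
    (h1 : k0 ^ 2 > kbar) (h2 : k1 ^ 2 - k0 > kbar) :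
    let A : Matrix (Fin 2) (Fin 2) ℝ := !![0, 1; -k0, -k1]
    let P : Matrix (Fin 2) (Fin 2) ℝ := !![2 * k0 * k1, k0; k0, k1]
    (-(P * A + Aᵀ * P + (2 * kbar) • (1 : Matrix (Fin 2) (Fin 2) ℝ))).PosDef := by
  intro A P
  rw [Matrix.posDef_iff_dotProduct_mulVec]
  constructor
  · ext i j
    fin_cases i <;> fin_cases j <;>
      simp [A, P, Matrix.mul_apply, Fin.sum_univ_two, Matrix.one_apply, Matrix.vecHead, Matrix.vecTail] <;> ring
  · intro x hx
    have hx0 : x 0 ≠ 0 ∨ x 1 ≠ 0 := by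
      by_contra h
      push_neg at h
      exact hx (funext fun i => by fin_cases i <;> simp [h.1, h.2])
    have e : (star x) ⬝ᵥ (-(P * A + Aᵀ * P + (2 * kbar) • (1 : Matrix (Fin 2) (Fin 2) ℝ))) *ᵥ x
        = (2 * k0 ^ 2 - 2 * kbar) * x 0 ^ 2 + (2 * (k1 ^ 2 - k0) - 2 * kbar) * x 1 ^ 2 := by
      simp [A, P, Matrix.mulVec, dotProduct, Fin.sum_univ_two, Matrix.mul_apply,
        Matrix.one_apply, Matrix.vecHead, Matrix.vecTail]
      ring
    rw [e]
    rcases hx0 with h | h <;>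
      nlinarith [sq_nonneg (x 0), sq_nonneg (x 1), pow_two_pos_of_ne_zero h]
end

section
/- If k0, k1, k2 are positive reals with k1^2 > 2 k0 k2 and k2^2 > k1, then the 3×3 symmetric matrix P with rows [2k0k1, 2k0k2, k0], [2k0k2, 2k1k2 - k0, k1], [k0, k1, k2] is positive definite. -/
theorem stmt_6 (k0 k1 k2 : ℝ) (hk0 : 0 < k0) (hk1 : 0 < k1) (hk2 : 0 < k2)
    (h1 : k1 ^ 2 > 2 * k0 * k2) (h2 : k2 ^ 2 > k1) :
    (!![2 * k0 * k1, 2 * k0 * k2, k0;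
        2 * k0 * k2, 2 * k1 * k2 - k0, k1;
        k0, k1, k2] : Matrix (Fin 3) (Fin 3) ℝ).PosDef := by
  have hA : 0 < 2 * k0 * k1 * k2 - k0 ^ 2 := by
    nlinarith [mul_pos (sub_pos.mpr h1) hk0, mul_pos (sub_pos.mpr h2) (mul_pos hk0 hk1),
      mul_pos hk0 hk2, mul_pos hk1 hk2]
  have hD : 0 < 4 * k1 ^ 2 * k2 ^ 2 - 2 * k1 ^ 3 - 4 * k0 * k2 ^ 3 + k0 ^ 2 := by
    nlinarith [mul_pos (sub_pos.mpr h1) (mul_pos hk2 hk2),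
      mul_pos (sub_pos.mpr h2) (mul_pos hk1 hk1), sq_nonneg k0]
  refine Matrix.PosDef.of_dotProduct_mulVec_pos ?_ (fun x hx => ?_)
  · ext i j
    fin_cases i <;> fin_cases j <;> simp [Matrix.conjTranspose_apply]
  · have hx' : x 0 ≠ 0 ∨ x 1 ≠ 0 ∨ x 2 ≠ 0 := by
      by_contra h; push_neg at h; apply hx; ext i
      fin_cases i <;> simp [h.1, h.2.1, h.2.2]
    simp only [dotProduct, Matrix.mulVec, Fin.sum_univ_three, Matrix.cons_val',
      Matrix.cons_val_zero, Matrix.cons_val_one, Matrix.head_cons, Matrix.empty_val',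
      Matrix.cons_val_fin_one, Matrix.head_fin_const, star_trivial, Pi.star_apply,
      RCLike.star_def, map_one]
    norm_num [Matrix.of_apply, Matrix.cons_val_zero, Matrix.cons_val_one, Matrix.head_cons,
      Matrix.cons_val_two, Matrix.tail_cons]
    set a := x 0 with ha'
    set b := x 1 with hb'
    set c := x 2 with hc'
    by_cases hb : b = 0
    · by_cases ha : a = 0
      · have hc : c ≠ 0 := by rcases hx' with h|h|h <;> tauto
        rw [ha, hb]
        nlinarith [mul_pos hk2 (mul_self_pos.mpr hc)]
      · rw [hb]
        nlinarith [mul_pos (mul_pos hA hk2) hk2,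
          mul_nonneg hA.le (sq_nonneg (k0 * a + k2 * c)),
          mul_pos (mul_pos hA hA) (mul_self_pos.mpr ha), mul_pos hA hk2]
    · nlinarith [mul_pos hA hk2,
        mul_nonneg hA.le (sq_nonneg (k0 * a + k1 * b + k2 * c)),
        sq_nonneg ((2 * k0 * k1 * k2 - k0 ^ 2) * a + (2 * k0 * k2 ^ 2 - k0 * k1) * b),
        mul_pos (mul_pos (mul_pos hk0 hk2) hD) (mul_self_pos.mpr hb)]
end

section
/- If k0, k1, k2, k3 are positive reals satisfying k1^2 > 2 k0 k2, k2^2 > 2 k1 k3, and k3^2 > k2, then the polynomial s^4 + k3 s^3 + k2 s^2 + k1 s + k0 is Hurwitz stable: every complex root has negative real part. -/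
theorem stmt_8 (k0 k1 k2 k3 : ℝ) (hk0 : 0 < k0) (hk1 : 0 < k1) (hk2 : 0 < k2) (hk3 : 0 < k3)
    (h1 : k1 ^ 2 > 2 * k0 * k2) (h2 : k2 ^ 2 > 2 * k1 * k3) (h3 : k3 ^ 2 > k2) :
    ∀ s : ℂ, s ^ 4 + (k3 : ℂ) * s ^ 3 + (k2 : ℂ) * s ^ 2 + (k1 : ℂ) * s + (k0 : ℂ) = 0 →
      s.re < 0 := by
  -- Routh–Hurwitz quantity
  have hR : k1 * k2 * k3 - k1 ^ 2 - k0 * k3 ^ 2 > 0 := by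
    nlinarith [mul_pos hk1 hk3, mul_pos hk2 hk3, mul_pos hk0 hk2,
      mul_lt_mul_of_pos_right h1 (mul_pos hk3 hk3),
      mul_lt_mul_of_pos_right h2 (mul_pos hk2 hk3),
      mul_lt_mul_of_pos_right h2 (mul_pos hk3 (mul_pos hk3 hk3)),
      mul_lt_mul_of_pos_right h3 (mul_pos (mul_pos hk2 hk2) hk3),
      mul_pos hk1 hk1, mul_pos hk2 hk2, mul_pos hk3 hk3]
  have hc1 : k1 * k3 + k2 ^ 2 - 4 * k0 > 0 := by
    nlinarith [mul_lt_mul_of_pos_right h2 hk2, mul_lt_mul_of_pos_right h3 hk2,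
      mul_pos hk1 hk3, mul_pos hk2 hk2, mul_lt_mul_of_pos_right h1 hk3]
  have hc2 : 2 * k2 * k3 ^ 2 + k1 * k3 + k2 ^ 2 - 4 * k0 > 0 := by
    nlinarith [mul_pos (mul_pos hk2 hk3) hk3, mul_pos hk1 hk3]
  intro s hs
  by_contra hcon
  push_neg at hcon
  have hre := congrArg Complex.re hs
  have him := congrArg Complex.im hs
  simp [Complex.add_re, Complex.add_im, Complex.mul_re, Complex.mul_im, pow_succ] at hre him
  set x := s.re with hxd
  set y := s.im with hyd
  have E1 : x ^ 4 - 6 * x ^ 2 * y ^ 2 + y ^ 4 + k3 * (x ^ 3 - 3 * x * y ^ 2)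
      + k2 * (x ^ 2 - y ^ 2) + k1 * x + k0 = 0 := by linear_combination hre
  have E2 : y * (4 * x ^ 3 - 4 * x * y ^ 2 + 3 * k3 * x ^ 2 - k3 * y ^ 2 + 2 * k2 * x + k1) = 0 := by
    linear_combination him
  rcases mul_eq_zero.1 E2 with hy | hC
  · -- y = 0 : real root, but polynomial positive for x ≥ 0
    rw [hy] at E1
    nlinarith [pow_nonneg hcon 4, pow_nonneg hcon 3, pow_nonneg hcon 2,
      mul_nonneg hk3.le (pow_nonneg hcon 3), mul_nonneg hk2.le (pow_nonneg hcon 2),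
      mul_nonneg hk1.le hcon]
  · -- y ≠ 0 case is absorbed: hC gives u*(4x+k3) = A with u = y^2
    have hu : (0:ℝ) ≤ y ^ 2 := sq_nonneg y
    set u : ℝ := y ^ 2 with hud
    have E2' : u * (4 * x + k3) - (4 * x ^ 3 + 3 * k3 * x ^ 2 + 2 * k2 * x + k1) = 0 := by
      rw [hud]; linear_combination -hC
    have E1' : x ^ 4 - 6 * x ^ 2 * u + u ^ 2 + k3 * (x ^ 3 - 3 * x * u)
        + k2 * (x ^ 2 - u) + k1 * x + k0 = 0 := by rw [hud]; linear_combination E1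
    -- eliminate u
    have hF : -(k1 * k2 * k3 - k1 ^ 2 - k0 * k3 ^ 2)
        - 2 * k3 * (k1 * k3 + k2 ^ 2 - 4 * k0) * x
        - 4 * (2 * k2 * k3 ^ 2 + k1 * k3 + k2 ^ 2 - 4 * k0) * x ^ 2
        - 8 * k3 * (k3 ^ 2 + 4 * k2) * x ^ 3
        - 16 * (3 * k3 ^ 2 + 2 * k2) * x ^ 4
        - 96 * k3 * x ^ 5 - 64 * x ^ 6 = 0 := by
      linear_combination (4 * x + k3) ^ 2 * E1'
        + ((6 * x ^ 2 + 3 * k3 * x + k2) * (4 * x + k3)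
          - (4 * x ^ 3 + 3 * k3 * x ^ 2 + 2 * k2 * x + k1) - u * (4 * x + k3)) * E2'
    have ht1 : 0 ≤ 2 * k3 * (k1 * k3 + k2 ^ 2 - 4 * k0) * x :=
      mul_nonneg (mul_nonneg (by positivity) hc1.le) hcon
    have ht2 : 0 ≤ 4 * (2 * k2 * k3 ^ 2 + k1 * k3 + k2 ^ 2 - 4 * k0) * x ^ 2 :=
      mul_nonneg (mul_nonneg (by norm_num) hc2.le) (pow_nonneg hcon 2)
    have ht3 : 0 ≤ 8 * k3 * (k3 ^ 2 + 4 * k2) * x ^ 3 :=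
      mul_nonneg (by positivity) (pow_nonneg hcon 3)
    have ht4 : 0 ≤ 16 * (3 * k3 ^ 2 + 2 * k2) * x ^ 4 :=
      mul_nonneg (by positivity) (pow_nonneg hcon 4)
    have ht5 : 0 ≤ 96 * k3 * x ^ 5 := mul_nonneg (by positivity) (pow_nonneg hcon 5)
    have ht6 : 0 ≤ 64 * x ^ 6 := mul_nonneg (by norm_num) (pow_nonneg hcon 6)
    linarith [hF, hR, ht1, ht2, ht3, ht4, ht5, ht6]
end

section
/- Suppose positive reals k0,…,kn satisfy k_{i-1}^2 > 2 k_{i-2} k_i for 2 ≤ i ≤ n. Then for all 1 ≤ i ≤ j ≤ n-1, one has k_i k_j > 2^{j-i+1} k_{i-1} k_{j+1}; in particular k_i k_j > k_{i-1} k_{j+1}. -/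
theorem stmt_10 (n : ℕ) (hn : 2 ≤ n) (k : ℕ → ℝ) (hpos : ∀ i ≤ n, 0 < k i)
    (hk : ∀ i, 2 ≤ i → i ≤ n → k (i - 1) ^ 2 > 2 * k (i - 2) * k i) :
    ∀ i j, 1 ≤ i → i ≤ j → j ≤ n - 1 →
      k i * k j > 2 ^ (j - i + 1) * (k (i - 1) * k (j + 1)) ∧
      k i * k j > k (i - 1) * k (j + 1) := by
  intro i j hi hij hj
  have key : ∀ j, i ≤ j → j ≤ n - 1 →
      k i * k j > 2 ^ (j - i + 1) * (k (i - 1) * k (j + 1)) := by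
    intro j hij
    induction j, hij using Nat.le_induction with
    | base =>
      intro hin
      have h := hk (i + 1) (by omega) (by omega)
      have e1 : i + 1 - 1 = i := by omega
      have e2 : i + 1 - 2 = i - 1 := by omega
      rw [e1, e2] at h
      have e3 : i - i + 1 = 1 := by omega
      rw [e3, pow_one]
      nlinarith [h]
    | succ m hm ih =>
      intro hmn
      have ih' := ih (by omega)
      have h := hk (m + 2) (by omega) (by omega)
      have e1 : m + 2 - 1 = m + 1 := by omega
      have e2 : m + 2 - 2 = m := by omega
      rw [e1, e2] at h
      have e3 : m + 1 - i + 1 = (m - i + 1) + 1 := by omega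
      rw [e3, pow_succ]
      set A := (2:ℝ) ^ (m - i + 1) with hA
      have hApos : 0 < A := by positivity
      have p1 : 0 < k m := hpos m (by omega)
      have p2 : 0 < k (m+1) := hpos (m+1) (by omega)
      have p3 : 0 < k (m+2) := hpos (m+2) (by omega)
      have p4 : 0 < k i := hpos i (by omega)
      have p5 : 0 < k (i-1) := hpos (i-1) (by omega)
      have hprod : (A * (k (i-1) * k (m+1))) * (2 * k m * k (m+2))
          < (k i * k m) * (k (m+1)) ^ 2 := by
        apply mul_lt_mul'' ih' h <;> positivity
      nlinarith [hprod, mul_pos p1 p2, mul_pos (mul_pos hApos p5) p3]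
  have h := key j hij hj
  refine ⟨h, lt_trans ?_ h⟩
  have p5 : 0 < k (i-1) := hpos (i-1) (by omega)
  have p6 : 0 < k (j+1) := hpos (j+1) (by omega)
  have h1 : (2:ℝ) ≤ 2 ^ (j - i + 1) := by
    calc (2:ℝ) = 2 ^ 1 := (pow_one 2).symm
    _ ≤ 2 ^ (j - i + 1) := by
      apply pow_le_pow_right₀ (by norm_num) (by omega)
  nlinarith [mul_pos p5 p6, h1]
end

section
/- Suppose positive reals k0,…,kn satisfy k_j^2 > 2 k_{j-1} k_{j+1} for 1 ≤ j ≤ n-1 and k_n^2 > k_{n-1}. Then for every 0 ≤ i ≤ n-1, one has k_{i+1} k_n > k_i. -/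
theorem stmt_11 (n : ℕ) (hn : 2 ≤ n) (k : ℕ → ℝ) (hpos : ∀ i ≤ n, 0 < k i)
    (hk : ∀ j, 1 ≤ j → j ≤ n - 1 → k j ^ 2 > 2 * k (j - 1) * k (j + 1))
    (hkn : k n ^ 2 > k (n - 1)) :
    ∀ i ≤ n - 1, k (i + 1) * k n > k i := by
  have key : ∀ m, m ≤ n - 1 → k (n - 1 - m + 1) * k n > k (n - 1 - m) := by
    intro m
    induction m with
    | zero =>
      intro _
      have h1 : n - 1 - 0 + 1 = n := by omega
      have h2 : n - 1 - 0 = n - 1 := by omega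
      rw [h1, h2]
      nlinarith [hkn]
    | succ m ih =>
      intro hm
      have ih' := ih (by omega)
      set i := n - 1 - (m + 1) with hi
      have e1 : n - 1 - m = i + 1 := by omega
      
      rw [e1] at ih'
      have hj := hk (i + 1) (by omega) (by omega)
      have e3 : i + 1 - 1 = i := by omega
      
      rw [e3] at hj
      have p0 := hpos i (by omega)
      have p1 := hpos (i + 1) (by omega)
      have p2 := hpos (i + 1 + 1) (by omega)
      have pn := hpos n (by omega)
      show k (i + 1) * k n > k i
      nlinarith [mul_pos p0 pn, mul_pos p1 pn, mul_pos p0 p2]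
  intro i hi
  have := key (n - 1 - i) (by omega)
  have e : n - 1 - (n - 1 - i) = i := by omega
  rw [e] at this
  exact this
end

section
/- Define p_{ij} recursively by p_{0j} = 2 k0 k_{j+1} for 0≤j≤n-1, p_{0n}=k0, p_{ij} = 2 k_i k_{j+1} - p_{i-1,j+1} for i≤j≤n-1, p_{in}=k_i. If the positive reals k0,…,kn satisfy k_j^2 > 2 k_{j-1} k_{j+1} (1≤j≤n-1) and k_n^2 > k_{n-1}, then 0 ≤ p_{ij} ≤ 2 k_i k_{j+1} for all 0 ≤ i ≤ j ≤ n-1. -/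
theorem stmt_12 (n : ℕ) (hn : 2 ≤ n) (k : ℕ → ℝ) (hpos : ∀ i ≤ n, 0 < k i)
    (hk : ∀ j, 1 ≤ j → j ≤ n - 1 → k j ^ 2 > 2 * k (j - 1) * k (j + 1))
    (hkn : k n ^ 2 > k (n - 1))
    (p : ℕ → ℕ → ℝ)
    (hp0 : ∀ j ≤ n - 1, p 0 j = 2 * k 0 * k (j + 1))
    (hp0n : p 0 n = k 0)
    (hpi : ∀ i j, 1 ≤ i → i ≤ j → j ≤ n - 1 → p i j = 2 * k i * k (j + 1) - p (i - 1) (j + 1))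
    (hpin : ∀ i, 1 ≤ i → i ≤ n → p i n = k i) :
    ∀ i j, i ≤ j → j ≤ n - 1 → 0 ≤ p i j ∧ p i j ≤ 2 * k i * k (j + 1) := by
  -- monotonicity of a ↦ k (a-1) / k a, in cross-multiplied form
  have smono : ∀ a b, 1 ≤ a → a ≤ b → b ≤ n → k (a - 1) * k b ≤ k a * k (b - 1) := by
    intro a b ha hab hbn
    induction b, hab using Nat.le_induction with
    | base => rw [mul_comm]
    | succ b hb ih =>
      have hb' : b ≤ n := Nat.le_of_succ_le hbn
      have hb1 : 1 ≤ b := ha.trans hb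
      have step := hk b hb1 (by omega)
      have ih' := ih hb'
      have h1 := hpos (b - 1) (by omega)
      have h2 := hpos b hb'
      have h3 := hpos (b + 1) hbn
      have h4 := hpos (a - 1) (by omega)
      have h5 := hpos a (by omega)
      have hbb : b + 1 - 1 = b := rfl
      rw [hbb]
      -- from ih' : k(a-1)*k b ≤ k a * k(b-1) and step : k b ^2 > 2 k(b-1) k(b+1)
      have c1 := mul_le_mul_of_nonneg_right ih' h3.le
      have c2 : k (b - 1) * k (b + 1) ≤ k b * k b := by nlinarith
      have c3 := mul_le_mul_of_nonneg_left c2 h5.le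
      -- c1 : k(a-1)*k b*k(b+1) ≤ k a*k(b-1)*k(b+1), c3 : k a*(k(b-1)*k(b+1)) ≤ k a*(k b * k b)
      have c4 : k (a - 1) * k (b + 1) * k b ≤ k a * k b * k b := by nlinarith
      exact le_of_mul_le_mul_right c4 h2
  intro i
  induction i with
  | zero =>
    intro j hij hjn
    rw [hp0 j hjn]
    have h1 := hpos 0 (by omega)
    have h2 := hpos (j + 1) (by omega)
    constructor
    · positivity
    · exact le_refl _
  | succ i ih =>
    intro j hij hjn
    have hrec : p (i + 1) j = 2 * k (i + 1) * k (j + 1) - p i (j + 1) := by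
      have := hpi (i + 1) j (by omega) hij hjn
      simpa using this
    have hki1 := hpos (i + 1) (by omega)
    have hkj1 := hpos (j + 1) (by omega)
    by_cases hc : j + 1 ≤ n - 1
    · obtain ⟨h0, h2⟩ := ih (j + 1) (by omega) hc
      have hs := smono (i + 1) (j + 2) (by omega) (by omega) (by omega)
      simp only [Nat.add_sub_cancel] at hs
      have hj2 : (j + 2 : ℕ) - 1 = j + 1 := rfl
      rw [hj2] at hs
      constructor
      · rw [hrec]; nlinarith
      · rw [hrec]; linarith
    · -- j + 1 = n
      have hjn' : j + 1 = n := by omega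
      have hpval : p i (j + 1) = k i := by
        rw [hjn']
        rcases Nat.eq_zero_or_pos i with h | h
        · rw [h]; exact hp0n
        · exact hpin i h (by omega)
      have hki := hpos i (by omega)
      have hkn0 := hpos n (by omega)
      have hkn1 := hpos (n - 1) (by omega)
      have hs := smono (i + 1) n (by omega) (by omega) le_rfl
      simp only [Nat.add_sub_cancel] at hs
      -- hs : k i * k n ≤ k (i+1) * k (n-1), hkn : k n ^2 > k (n-1)
      have key : k i ≤ 2 * k (i + 1) * k n := by nlinarith
      constructor
      · rw [hrec, hpval, hjn']; linarith
      · rw [hrec, hpval]; linarith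
end
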